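/- Let A be an abelian group, P a set of primes, and let s : ℕ → P × ℕ be a bijection onto P × ℕ. Define a sequential diagram A_0 → A_1 → ⋯ where each A_n = A and the transition map A_n → A_{n+1} is multiplication by the prime pr₁(s(n)). Then for every prime p ∈ P, multiplication by p on the colimit colim_n A_n is an isomorphism (i.e. every p ∈ P is invertible on the colimit). -/

import Mathlib

universe u
open CategoryTheory CategoryTheory.Limits

/-- The sequential diagram `A → A → A → ⋯` whose `n`-th transition map is
multiplication by the prime `(s n).1`. -/
noncomputable def multDiagram (A : AddCommGrpCat.{u}) (P : Set ℕ) (s : ℕ ≃ P × ℕ) :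
    ℕ ⥤ AddCommGrpCat.{u} :=
  CategoryTheory.Functor.ofSequence
    (X := fun _ => A)
    (fun n => AddCommGrpCat.ofHom ((((s n).1 : ℕ) • AddMonoidHom.id A)))

lemma multDiagram_map_apply (A : AddCommGrpCat.{u}) (P : Set ℕ) (s : ℕ ≃ P × ℕ) {n m : ℕ}
    (h : n ≤ m) (a : A) :
    (multDiagram A P s).map (homOfLE h) a = (∏ i ∈ Finset.Ico n m, ((s i).1 : ℕ)) • a := by
  induction m, h using Nat.le_induction with
  | base => simp [multDiagram]; rfl
  | succ m h ih =>
    rw [show (homOfLE (h.trans m.le_succ) : n ⟶ m+1) = homOfLE h ≫ homOfLE m.le_succ from rfl,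
      Functor.map_comp]
    erw [CategoryTheory.comp_apply, ih]
    rw [ Finset.prod_Ico_succ_top h]
    have : (multDiagram A P s).map (homOfLE m.le_succ)
        = AddCommGrpCat.ofHom ((((s m).1 : ℕ) • AddMonoidHom.id A)) :=
      Functor.ofSequence_map_homOfLE_succ _ m
    rw [this]
    show (((s m).1 : ℕ) • AddMonoidHom.id A) _ = _
    simp [mul_smul, mul_comm]

lemma exists_index (P : Set ℕ) (s : ℕ ≃ P × ℕ) (p : ℕ) (hp : p ∈ P) (n : ℕ) :
    ∃ m, n ≤ m ∧ ((s m).1 : ℕ) = p := by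
  have hinj : Function.Injective (fun k : ℕ => s.symm (⟨p, hp⟩, k)) := by
    intro a b hab
    simpa using congrArg (fun x => (s x).2) hab
  obtain ⟨x, ⟨k, rfl⟩, hx⟩ := (Set.infinite_range_of_injective hinj).exists_gt n
  exact ⟨s.symm (⟨p, hp⟩, k), hx.le, by simp⟩


/-- For an abelian group `A`, a set of primes `P` and a bijection
`s : ℕ ≃ P × ℕ`, every prime `p ∈ P` acts invertibly on the colimit of the sequential
diagram whose `n`-th transition map is multiplication by `pr₁ (s n)`. -/
theorem stmt0 (A : AddCommGrpCat.{u}) (P : Set ℕ) (hP : ∀ p ∈ P, p.Prime)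
    (s : ℕ ≃ P × ℕ) (p : ℕ) (hp : p ∈ P) :
    Function.Bijective (fun x : (colimit (multDiagram A P s) : AddCommGrpCat.{u}) => p • x) := by
  haveI : PreservesFilteredColimitsOfSize.{0,0} (forget AddCommGrpCat.{u}) :=
    preservesSmallestFilteredColimits_of_preservesFilteredColimits _
  constructor
  · have hadd : ∀ x y : (colimit (multDiagram A P s) : AddCommGrpCat.{u}), p • (x + y) = p • x + p • y :=
      fun x y => smul_add p x y
    rw [show (fun x : (colimit (multDiagram A P s) : AddCommGrpCat.{u}) => p • x)
        = (AddMonoidHom.mk' (fun x => p • x) hadd : _ → _) from rfl]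
    rw [injective_iff_map_eq_zero]
    intro x hx
    obtain ⟨n, a, rfl⟩ := Concrete.colimit_exists_rep (multDiagram A P s) x
    have hx' : colimit.ι (multDiagram A P s) n (p • a) = colimit.ι (multDiagram A P s) n 0 := by
      simpa [map_nsmul] using hx
    obtain ⟨m, f, g, hfg⟩ := Concrete.colimit_exists_of_rep_eq _ _ _ hx'
    have hnm : n ≤ m := leOfHom f
    have hfg' : (multDiagram A P s).map (homOfLE hnm) (p • a) = 0 := by
      have hf : f = homOfLE hnm := rfl
      rw [← hf, hfg]; exact map_zero _
    erw [multDiagram_map_apply] at hfg'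
    obtain ⟨m', hmm', hm'⟩ := exists_index P s p hp m
    have hle : n ≤ m' + 1 := hnm.trans (hmm'.trans m'.le_succ)
    have hrep : colimit.ι (multDiagram A P s) n a = colimit.ι (multDiagram A P s) (m'+1) ((multDiagram A P s).map (homOfLE hle) a) := by
      rw [← CategoryTheory.comp_apply, colimit.w]
    erw [hrep, multDiagram_map_apply]
    have hdvd : p ∣ ∏ i ∈ Finset.Ico m (m'+1), ((s i).1 : ℕ) := by
      rw [← hm']
      exact Finset.dvd_prod_of_mem _ (by simp [Finset.mem_Ico]; omega)
    obtain ⟨d, hd⟩ := hdvd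
    have hsplit : (∏ i ∈ Finset.Ico n (m'+1), ((s i).1 : ℕ))
        = (∏ i ∈ Finset.Ico n m, ((s i).1 : ℕ)) * ∏ i ∈ Finset.Ico m (m'+1), ((s i).1 : ℕ) :=
      (Finset.prod_Ico_consecutive _ hnm (hmm'.trans m'.le_succ)).symm
    rw [hsplit, hd, show (∏ i ∈ Finset.Ico n m, ((s i).1 : ℕ)) * (p * d)
        = d * (p * ∏ i ∈ Finset.Ico n m, ((s i).1 : ℕ)) by ring]
    erw [mul_smul, mul_smul]
    erw [smul_comm p, hfg', smul_zero (A := (A : Type u)) d]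
    exact map_zero _
  · intro x
    obtain ⟨n, a, rfl⟩ := Concrete.colimit_exists_rep (multDiagram A P s) x
    obtain ⟨m, hnm, hm⟩ := exists_index P s p hp n
    refine ⟨colimit.ι (multDiagram A P s) (m+1) ((multDiagram A P s).map (homOfLE hnm) a), ?_⟩
    have h1 : colimit.ι (multDiagram A P s) n a = colimit.ι (multDiagram A P s) m ((multDiagram A P s).map (homOfLE hnm) a) := by
      rw [← CategoryTheory.comp_apply, colimit.w]
    have h2 : colimit.ι (multDiagram A P s) m ((multDiagram A P s).map (homOfLE hnm) a)
        = colimit.ι (multDiagram A P s) (m+1) ((multDiagram A P s).map (homOfLE m.le_succ) ((multDiagram A P s).map (homOfLE hnm) a)) := by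
      rw [← CategoryTheory.comp_apply ((multDiagram A P s).map (homOfLE m.le_succ)), colimit.w]
    show p • colimit.ι (multDiagram A P s) (m+1) ((multDiagram A P s).map (homOfLE hnm) a)
        = colimit.ι (multDiagram A P s) n a
    erw [← map_nsmul, h1, h2]
    congr 1
    have hsucc : (multDiagram A P s).map (homOfLE m.le_succ)
        = AddCommGrpCat.ofHom ((((s m).1 : ℕ) • AddMonoidHom.id A)) :=
      Functor.ofSequence_map_homOfLE_succ _ m
    rw [hsucc]
    show _ • _ = (((s m).1 : ℕ) • AddMonoidHom.id A) _
    simp [hm]; rfl
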